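/- Let A : I → M_k(ℝ) be a continuous matrix-valued function on an interval I and E : I → M_{m×k}(ℝ) a C¹ solution of E'(s) = E(s) A(s). Then the rank of E(s) is constant on I. -/

import Mathlib

open Set Matrix

private lemma vecMul_lipschitz {k : ℕ} (M : Matrix (Fin k) (Fin k) ℝ) {C : ℝ}
    (h : ∑ i, ∑ j, |M i j| ≤ C) :
    LipschitzWith C.toNNReal (fun y : Fin k → ℝ => y ᵥ* M) := by
  have hC : 0 ≤ C := le_trans (by positivity) h
  apply LipschitzWith.of_dist_le_mul
  intro y z
  rw [dist_eq_norm, dist_eq_norm, ← Matrix.sub_vecMul]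
  set w := y - z
  rw [Real.coe_toNNReal _ hC]
  have hnn : 0 ≤ C * ‖w‖ := mul_nonneg hC (norm_nonneg _)
  rw [pi_norm_le_iff_of_nonneg hnn]
  intro j
  have : (w ᵥ* M) j = ∑ i, w i * M i j := by
    simp [Matrix.vecMul, dotProduct]
  rw [Real.norm_eq_abs, this]
  calc |∑ i, w i * M i j| ≤ ∑ i, |w i * M i j| := Finset.abs_sum_le_sum_abs _ _
    _ ≤ ∑ i, ‖w‖ * |M i j| := by
        apply Finset.sum_le_sum
        intro i _
        rw [abs_mul]
        exact mul_le_mul_of_nonneg_right (norm_le_pi_norm w i) (abs_nonneg _)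
    _ = ‖w‖ * ∑ i, |M i j| := by rw [Finset.mul_sum]
    _ ≤ ‖w‖ * C := by
        apply mul_le_mul_of_nonneg_left _ (norm_nonneg _)
        refine le_trans ?_ h
        apply Finset.sum_le_sum
        intro i _
        exact Finset.single_le_sum (fun j' _ => abs_nonneg (M i j')) (Finset.mem_univ j)
    _ = C * ‖w‖ := mul_comm _ _

private lemma key_zero {m k : ℕ} {I : Set ℝ} (hI : I.OrdConnected)
    {A : ℝ → Matrix (Fin k) (Fin k) ℝ} {E : ℝ → Matrix (Fin m) (Fin k) ℝ}
    (hA : ∀ i j, ContinuousOn (fun s => A s i j) I)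
    (hE : ∀ s ∈ I, ∀ i j, HasDerivAt (fun t => E t i j) ((E s * A s) i j) s)
    (v : Fin m → ℝ) {s t : ℝ} (hs : s ∈ I) (ht : t ∈ I)
    (h0 : v ᵥ* E s = 0) : v ᵥ* E t = 0 := by
  set f : ℝ → (Fin k → ℝ) := fun τ => v ᵥ* E τ with hf_def
  have hderiv : ∀ τ ∈ I, HasDerivAt f (f τ ᵥ* A τ) τ := by
    intro τ hτ
    have hrw : f τ ᵥ* A τ = v ᵥ* (E τ * A τ) := Matrix.vecMul_vecMul v (E τ) (A τ)
    rw [hrw]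
    apply hasDerivAt_pi.mpr
    intro j
    have h1 : (fun τ' => f τ' j) = fun τ' => ∑ i, v i * E τ' i j := by
      funext τ'
      simp [hf_def, Matrix.vecMul, dotProduct]
    have h2 : (v ᵥ* (E τ * A τ)) j = ∑ i, v i * (E τ * A τ) i j := by
      simp [Matrix.vecMul, dotProduct]
    rw [h2]
    have := HasDerivAt.sum (u := Finset.univ)
      (A := fun i τ' => v i * E τ' i j) (A' := fun i => v i * (E τ * A τ) i j)
      (fun i _ => HasDerivAt.const_mul (v i) (hE τ hτ i j))
    rw [h1]; simpa [Finset.sum_fn] using this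
  have hcont : ContinuousOn f I := fun τ hτ =>
    ((hderiv τ hτ).continuousAt).continuousWithinAt
  -- bound on A over Icc (min s t) (max s t)
  have hminmax : min s t ≤ max s t := min_le_max
  have hsub : Icc (min s t) (max s t) ⊆ I := by
    rcases le_total s t with h | h
    · rw [min_eq_left h, max_eq_right h]; exact hI.out hs ht
    · rw [min_eq_right h, max_eq_left h]; exact hI.out ht hs
  have hgcont : ContinuousOn (fun τ => ∑ i, ∑ j, |A τ i j|) I := by
    apply continuousOn_finset_sum
    intro i _
    apply continuousOn_finset_sum
    intro j _
    exact (hA i j).abs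
  obtain ⟨C, hC⟩ := (isCompact_Icc (a := min s t) (b := max s t)).exists_bound_of_continuousOn
    (hgcont.mono hsub)
  set w : ℝ → (Fin k → ℝ) → (Fin k → ℝ) :=
    fun τ y => y ᵥ* A (Set.projIcc (min s t) (max s t) hminmax τ : ℝ) with hw_def
  have hv : ∀ τ, LipschitzOnWith C.toNNReal (w τ) univ := by
    intro τ
    apply LipschitzWith.lipschitzOnWith
    apply vecMul_lipschitz
    have hmem := (Set.projIcc (min s t) (max s t) hminmax τ).2
    have := hC _ hmem
    rw [Real.norm_eq_abs] at this
    exact le_trans (le_abs_self _) this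
  have hweq : ∀ τ ∈ Icc (min s t) (max s t), ∀ y, w τ y = y ᵥ* A τ := by
    intro τ hτ y
    rw [hw_def]
    simp [Set.projIcc_of_mem hminmax hτ]
  have hzero : ∀ τ, w τ 0 = 0 := fun τ => Matrix.zero_vecMul _
  have key : EqOn f (fun _ => (0 : Fin k → ℝ)) (Icc (min s t) (max s t)) := by
    rcases le_total s t with h | h
    · rw [min_eq_left h, max_eq_right h] at *
      apply ODE_solution_unique_of_mem_Icc_right (fun τ _ => hv τ) (hcont.mono hsub)
        ?_ (fun _ _ => mem_univ _) continuousOn_const ?_ (fun _ _ => mem_univ _)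
        (by simpa using h0)
      · intro τ hτ
        rw [hweq τ (Ico_subset_Icc_self hτ)]
        exact (hderiv τ (hsub (Ico_subset_Icc_self hτ))).hasDerivWithinAt
      · intro τ hτ
        rw [hzero τ]
        exact (hasDerivAt_const τ _).hasDerivWithinAt
    · rw [min_eq_right h, max_eq_left h] at *
      apply ODE_solution_unique_of_mem_Icc_left (fun τ _ => hv τ) (hcont.mono hsub)
        ?_ (fun _ _ => mem_univ _) continuousOn_const ?_ (fun _ _ => mem_univ _)
        (by simpa using h0)
      · intro τ hτ
        rw [hweq τ (Ioc_subset_Icc_self hτ)]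
        exact (hderiv τ (hsub (Ioc_subset_Icc_self hτ))).hasDerivWithinAt
      · intro τ hτ
        rw [hzero τ]
        exact (hasDerivAt_const τ _).hasDerivWithinAt
  have : f t = 0 := key ⟨min_le_right s t, le_max_right s t⟩
  simpa using this

/-- If `E : I → M_{m×k}(ℝ)` is a `C¹` solution of `E' = E A` with `A` continuous on a
connected interval `I`, then the rank of `E(s)` is constant on `I`. -/
theorem stmt_7 (m k : ℕ) (I : Set ℝ) (hI : I.OrdConnected)
    (A : ℝ → Matrix (Fin k) (Fin k) ℝ) (E : ℝ → Matrix (Fin m) (Fin k) ℝ)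
    (hA : ∀ i j, ContinuousOn (fun s => A s i j) I)
    (hE : ∀ s ∈ I, ∀ i j, HasDerivAt (fun t => E t i j) ((E s * A s) i j) s) :
    ∀ s ∈ I, ∀ t ∈ I, (E s).rank = (E t).rank := by
  have hker : ∀ s ∈ I, ∀ t ∈ I,
      LinearMap.ker ((E s)ᵀ.mulVecLin) ≤ LinearMap.ker ((E t)ᵀ.mulVecLin) := by
    intro s hs t ht v hv
    rw [LinearMap.mem_ker, Matrix.mulVecLin_apply, Matrix.mulVec_transpose] at hv ⊢
    exact key_zero hI hA hE v hs ht hv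
  intro s hs t ht
  have hkereq : LinearMap.ker ((E s)ᵀ.mulVecLin) = LinearMap.ker ((E t)ᵀ.mulVecLin) :=
    le_antisymm (hker s hs t ht) (hker t ht s hs)
  rw [← Matrix.rank_transpose (E s), ← Matrix.rank_transpose (E t)]
  have h1 := LinearMap.finrank_range_add_finrank_ker ((E s)ᵀ.mulVecLin)
  have h2 := LinearMap.finrank_range_add_finrank_ker ((E t)ᵀ.mulVecLin)
  have hrs : (E s)ᵀ.rank = Module.finrank ℝ (LinearMap.range (E s)ᵀ.mulVecLin) := rfl
  have hrt : (E t)ᵀ.rank = Module.finrank ℝ (LinearMap.range (E t)ᵀ.mulVecLin) := rfl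
  rw [hkereq] at h1
  rw [hrs, hrt]
  omega
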